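/- arXiv:2109.08765 — 3 statements merged into one kernel-verified Lean document; each statement's English description precedes it below -/
import Mathlib

section
/- The discriminant of the trinomial F(x) = x^n + a x + b is Δ(F) = (-1)^{n(n-1)/2} · (n^n · b^{n-1} + (1-n)^{n-1} · a^n). -/
open Polynomial

/-- The Sylvester matrix of two polynomials `f`, `g` over `ℤ`, where `m` and `n` are
(upper bounds for) the degrees of `f` and `g` respectively: the first `n` rows carry the
coefficients of `f` (in descending order), the last `m` rows carry those of `g`. -/
def sylvesterMatrix (f g : Polynomial ℤ) (m n : ℕ) :
    Matrix (Fin (m + n)) (Fin (m + n)) ℤ :=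
  Matrix.of fun i j =>
    if (i : ℕ) < n then
      (if (i : ℕ) ≤ (j : ℕ) ∧ (j : ℕ) ≤ (i : ℕ) + m then f.coeff (m + i - j) else 0)
    else
      (if (i : ℕ) - n ≤ (j : ℕ) ∧ (j : ℕ) ≤ ((i : ℕ) - n) + n then
        g.coeff (n + ((i : ℕ) - n) - j) else 0)

/-- The resultant `Res(f, g)` of two integer polynomials. -/
noncomputable def resultantZ (f g : Polynomial ℤ) : ℤ :=
  (sylvesterMatrix f g f.natDegree g.natDegree).det

/-- The discriminant of an integer polynomial `f` of degree `n`,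
defined as `(-1)^{n(n-1)/2} · Res(f, f')`. -/
noncomputable def discZ (f : Polynomial ℤ) : ℤ :=
  (-1) ^ (f.natDegree * (f.natDegree - 1) / 2) * resultantZ f (derivative f)

open Matrix Finset

section Aux

/-- top-right block of the permuted Sylvester matrix -/
def Bmat (m : ℕ) (a b : ℤ) : Matrix (Fin (m + 1)) (Fin (m + 2)) ℤ :=
  Matrix.of fun i j =>
    if (j : ℕ) = (i : ℕ) then a else if (j : ℕ) = (i : ℕ) + 1 then b else 0

/-- bottom-left block -/
def Cmat (m : ℕ) : Matrix (Fin (m + 2)) (Fin (m + 1)) ℤ :=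
  Matrix.of fun i j => if (i : ℕ) = (j : ℕ) then (m : ℤ) + 2 else 0

/-- bottom-right block -/
def Dmat (m : ℕ) (a : ℤ) : Matrix (Fin (m + 2)) (Fin (m + 2)) ℤ :=
  Matrix.of fun i j =>
    if (i : ℕ) = m + 1 ∧ (j : ℕ) = 0 then (m : ℤ) + 2
    else if (j : ℕ) = (i : ℕ) then a else 0

/-- the Schur complement -/
def Nmat (m : ℕ) (a b : ℤ) : Matrix (Fin (m + 2)) (Fin (m + 2)) ℤ :=
  Matrix.of fun i j =>
    if (i : ℕ) ≤ m then
      (if (j : ℕ) = (i : ℕ) then a * (1 - ((m : ℤ) + 2))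
       else if (j : ℕ) = (i : ℕ) + 1 then -(((m : ℤ) + 2) * b) else 0)
    else
      (if (j : ℕ) = 0 then (m : ℤ) + 2 else if (j : ℕ) = m + 1 then a else 0)

lemma det_minor0 (m : ℕ) (a b : ℤ) :
    ((Nmat m a b).submatrix (Fin.last (m+1)).succAbove ((0 : Fin (m+2)).succAbove)).det
      = (-(((m : ℤ) + 2) * b)) ^ (m + 1) := by
  rw [Matrix.det_of_lowerTriangular]
  · rw [Finset.prod_congr rfl (g := fun _ => -(((m : ℤ) + 2) * b)) (fun i _ => ?_)]
    · simp
    · simp only [Matrix.submatrix_apply, Fin.succAbove_last, Fin.succAbove_zero, Nmat,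
        Matrix.of_apply, Fin.coe_castSucc, Fin.val_succ]
      rw [if_pos (by omega : (i:ℕ) ≤ m), if_neg (by omega)]; simp
  · intro i j hij
    replace hij : (i:ℕ) < (j:ℕ) := hij
    simp only [Matrix.submatrix_apply, Fin.succAbove_last, Fin.succAbove_zero, Nmat,
      Matrix.of_apply, Fin.coe_castSucc, Fin.val_succ]
    rw [if_pos (by omega : (i:ℕ) ≤ m), if_neg (by omega), if_neg (by omega)]

lemma det_minorLast (m : ℕ) (a b : ℤ) :
    ((Nmat m a b).submatrix (Fin.last (m+1)).succAbove ((Fin.last (m+1)).succAbove)).det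
      = (a * (1 - ((m : ℤ) + 2))) ^ (m + 1) := by
  rw [Matrix.det_of_upperTriangular]
  · rw [Finset.prod_congr rfl (g := fun _ => a * (1 - ((m : ℤ) + 2))) (fun i _ => ?_)]
    · simp
    · simp only [Matrix.submatrix_apply, Fin.succAbove_last, Nmat,
        Matrix.of_apply, Fin.coe_castSucc]
      rw [if_pos (by omega : (i:ℕ) ≤ m)]; simp
  · intro i j hij
    replace hij : (j:ℕ) < (i:ℕ) := hij
    simp only [Matrix.submatrix_apply, Fin.succAbove_last, Nmat,
      Matrix.of_apply, Fin.coe_castSucc]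
    rw [if_pos (by omega : (i:ℕ) ≤ m), if_neg (by omega), if_neg (by omega)]

lemma detNmat (m : ℕ) (a b : ℤ) :
    (Nmat m a b).det =
      ((m : ℤ) + 2) ^ (m + 2) * b ^ (m + 1) + (1 - ((m : ℤ) + 2)) ^ (m + 1) * a ^ (m + 2) := by
  rw [Matrix.det_succ_row (Nmat m a b) (Fin.last (m + 1))]
  set g : Fin (m+2) → ℤ := fun j => (-1) ^ ((Fin.last (m+1) : ℕ) + (j:ℕ)) *
    Nmat m a b (Fin.last (m+1)) j *
    ((Nmat m a b).submatrix (Fin.last (m+1)).succAbove j.succAbove).det with hg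
  have h0 : (0 : Fin (m+2)) ∈ (univ : Finset (Fin (m+2))) := mem_univ _
  rw [← Finset.add_sum_erase _ g h0]
  have hlmem : Fin.last (m+1) ∈ (univ : Finset (Fin (m+2))).erase 0 :=
    Finset.mem_erase.2 ⟨by simp [Fin.ext_iff], mem_univ _⟩
  rw [← Finset.add_sum_erase _ g hlmem]
  have hzero : ∑ j ∈ (((univ : Finset (Fin (m+2))).erase 0).erase (Fin.last (m+1))), g j = 0 := by
    refine Finset.sum_eq_zero fun j hj => ?_
    obtain ⟨hj1, hj2, -⟩ : j ≠ Fin.last (m+1) ∧ j ≠ 0 ∧ True := by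
      simpa [Finset.mem_erase] using hj
    have h1 : (j : ℕ) ≠ m + 1 := fun h => hj1 (Fin.ext (by simpa using h))
    have h2 : (j : ℕ) ≠ 0 := fun h => hj2 (Fin.ext (by simpa using h))
    have : Nmat m a b (Fin.last (m+1)) j = 0 := by
      simp only [Nmat, Matrix.of_apply, Fin.val_last]
      rw [if_neg (by omega), if_neg h2, if_neg h1]
    rw [hg]
    simp [this]
  rw [hzero, add_zero, hg]
  have e0 : Nmat m a b (Fin.last (m+1)) 0 = (m : ℤ) + 2 := by
    simp only [Nmat, Matrix.of_apply, Fin.val_last, Fin.val_zero]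
    rw [if_neg (by omega)]; simp
  have el : Nmat m a b (Fin.last (m+1)) (Fin.last (m+1)) = a := by
    simp only [Nmat, Matrix.of_apply, Fin.val_last]
    rw [if_neg (by omega), if_neg (by omega)]; simp
  simp only [e0, el, det_minor0, det_minorLast, Fin.val_last, Fin.val_zero, add_zero]
  have hs : ((-1 : ℤ))^(m+1) * (-1)^(m+1) = 1 := by
    rw [← pow_add, Even.neg_one_pow ⟨m+1, by ring⟩]
  rw [neg_pow (((m:ℤ)+2)*b) (m+1), mul_pow ((m:ℤ)+2) b, mul_pow a (1 - ((m:ℤ)+2)),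
    pow_add ((-1:ℤ)) (m+1) (m+1)]
  linear_combination (((m:ℤ)+2)^(m+2)*b^(m+1) + (1-((m:ℤ)+2))^(m+1)*a^(m+2)) * hs

lemma schur (m : ℕ) (a b : ℤ) : Dmat m a - Cmat m * Bmat m a b = Nmat m a b := by
  ext i j
  simp only [Matrix.sub_apply, Matrix.mul_apply, Dmat, Nmat, Matrix.of_apply]
  by_cases hi : (i : ℕ) ≤ m
  · have hCB : ∑ c : Fin (m+1), Cmat m i c * Bmat m a b c j
        = ((m : ℤ) + 2) * Bmat m a b ⟨(i : ℕ), by omega⟩ j := by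
      rw [Fintype.sum_eq_single (⟨(i : ℕ), by omega⟩ : Fin (m+1))]
      · simp [Cmat]
      · intro c hc
        have : (i : ℕ) ≠ (c : ℕ) := fun h => hc (Fin.ext (by simp [← h]))
        simp [Cmat, this]
    rw [hCB]
    rw [if_neg (by omega), if_pos hi]
    simp only [Bmat, Matrix.of_apply]
    by_cases h1 : (j : ℕ) = (i : ℕ)
    · rw [if_pos h1, if_pos (by simpa using h1), if_pos h1]; ring
    · rw [if_neg h1, if_neg (by simpa using h1), if_neg h1]
      by_cases h2 : (j : ℕ) = (i : ℕ) + 1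
      · rw [if_pos h2, if_pos (by simpa using h2)]; ring
      · rw [if_neg h2, if_neg (by simpa using h2)]; ring
  · have hi' : (i : ℕ) = m + 1 := by omega
    have hCB : ∑ c : Fin (m+1), Cmat m i c * Bmat m a b c j = 0 := by
      refine Finset.sum_eq_zero fun c _ => ?_
      have : (i : ℕ) ≠ (c : ℕ) := by omega
      simp [Cmat, this]
    rw [hCB, sub_zero, if_neg hi]
    by_cases h0 : (j : ℕ) = 0
    · rw [if_pos ⟨hi', h0⟩, if_pos h0]
    · rw [if_neg (by tauto), if_neg h0, hi']

/-- the reindexing equivalence -/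
def eqv (m : ℕ) : Fin (m+1) ⊕ Fin (m+2) ≃ Fin ((m+2) + (m+1)) :=
  finSumFinEquiv.trans (finCongr (by omega))

lemma eqv_inl (m : ℕ) (i : Fin (m+1)) :
    ((eqv m (Sum.inl i) : Fin ((m+2)+(m+1))) : ℕ) = i := by
  simp [eqv]

lemma eqv_inr (m : ℕ) (j : Fin (m+2)) :
    ((eqv m (Sum.inr j) : Fin ((m+2)+(m+1))) : ℕ) = m + 1 + j := by
  simp [eqv]; omega

lemma coeff_trin' (m : ℕ) (a b : ℤ) (k : ℕ) :
    (X ^ (m+2) + C a * X + C b).coeff k =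
      (if k = m + 2 then 1 else 0) + (if k = 1 then a else 0) + (if k = 0 then b else 0) := by
  simp only [coeff_add, coeff_X_pow, coeff_C_mul, coeff_X, coeff_C, mul_ite, mul_one, mul_zero]
  congr 2
  split_ifs with h1 h2 <;> simp_all

lemma coeff_deriv' (m : ℕ) (a : ℤ) (k : ℕ) :
    (C ((m : ℤ) + 2) * X ^ (m+1) + C a).coeff k =
      (if k = m + 1 then (m : ℤ) + 2 else 0) + (if k = 0 then a else 0) := by
  simp only [coeff_add, coeff_C_mul, coeff_X_pow, coeff_C, mul_ite, mul_one, mul_zero]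

lemma natDegree_trin (m : ℕ) (a b : ℤ) :
    (X ^ (m+2) + C a * X + C b).natDegree = m + 2 := by
  rw [add_assoc, natDegree_add_eq_left_of_natDegree_lt, natDegree_X_pow]
  rw [natDegree_X_pow]
  calc (C a * X + C b).natDegree ≤ max (C a * X).natDegree (C b).natDegree := natDegree_add_le _ _
    _ ≤ 1 := by
        simp only [natDegree_C, max_le_iff]
        exact ⟨(natDegree_C_mul_le a X).trans (by simp), by omega⟩
    _ < m + 2 := by omega

lemma deriv_trin (m : ℕ) (a b : ℤ) :
    derivative (X ^ (m+2) + C a * X + C b) = C ((m : ℤ) + 2) * X ^ (m+1) + C a := by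
  simp only [derivative_add, derivative_X_pow, derivative_C, derivative_C_mul, derivative_X,
    add_zero, mul_one]
  push_cast
  ring

lemma natDegree_deriv_trin (m : ℕ) (a : ℤ) :
    (C ((m : ℤ) + 2) * X ^ (m+1) + C a).natDegree = m + 1 := by
  rw [natDegree_add_eq_left_of_natDegree_lt, natDegree_C_mul_X_pow _ _ (by positivity)]
  rw [natDegree_C_mul_X_pow _ _ (by positivity : ((m:ℤ)+2) ≠ 0), natDegree_C]
  omega

lemma sylv_blocks (m : ℕ) (a b : ℤ) :
    (sylvesterMatrix (X ^ (m+2) + C a * X + C b) (C ((m : ℤ) + 2) * X ^ (m+1) + C a)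
        (m+2) (m+1)).submatrix (eqv m) (eqv m)
      = Matrix.fromBlocks 1 (Bmat m a b) (Cmat m) (Dmat m a) := by
  ext i j
  cases i with
  | inl i =>
    cases j with
    | inl j =>
      have hi := i.isLt; have hj := j.isLt
      simp only [Matrix.submatrix_apply, sylvesterMatrix, Matrix.of_apply, eqv_inl,
        Matrix.fromBlocks_apply₁₁, Matrix.one_apply, Fin.ext_iff, coeff_trin']
      rw [if_pos (by omega : (i:ℕ) < m+1)]
      split_ifs <;> first | ring1 | omega
    | inr j =>
      have hi := i.isLt; have hj := j.isLt
      simp only [Matrix.submatrix_apply, sylvesterMatrix, Matrix.of_apply, eqv_inl, eqv_inr,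
        Matrix.fromBlocks_apply₁₂, Bmat, coeff_trin']
      rw [if_pos (by omega : (i:ℕ) < m+1)]
      split_ifs <;> first | ring1 | omega
  | inr i =>
    cases j with
    | inl j =>
      have hi := i.isLt; have hj := j.isLt
      simp only [Matrix.submatrix_apply, sylvesterMatrix, Matrix.of_apply, eqv_inl, eqv_inr,
        Matrix.fromBlocks_apply₂₁, Cmat, coeff_deriv']
      rw [if_neg (by omega : ¬ (m + 1 + (i:ℕ) < m+1))]
      split_ifs <;> first | ring1 | omega
    | inr j =>
      have hi := i.isLt; have hj := j.isLt
      simp only [Matrix.submatrix_apply, sylvesterMatrix, Matrix.of_apply, eqv_inr,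
        Matrix.fromBlocks_apply₂₂, Dmat, coeff_deriv']
      rw [if_neg (by omega : ¬ (m + 1 + (i:ℕ) < m+1))]
      split_ifs <;> first | ring1 | omega

end Aux

/-- The discriminant of the trinomial `x^n + a x + b` is
`(-1)^{n(n-1)/2} · (n^n b^{n-1} + (1-n)^{n-1} a^n)`. -/
theorem discZ_trinomial (n : ℕ) (hn : 2 ≤ n) (a b : ℤ) :
    discZ (X ^ n + C a * X + C b) =
      (-1) ^ (n * (n - 1) / 2) *
        ((n : ℤ) ^ n * b ^ (n - 1) + (1 - (n : ℤ)) ^ (n - 1) * a ^ n) := by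
  obtain ⟨m, rfl⟩ : ∃ m, n = m + 2 := ⟨n - 2, by omega⟩
  unfold discZ resultantZ
  rw [deriv_trin m a b, natDegree_trin m a b, natDegree_deriv_trin m a]
  have hdet : (sylvesterMatrix (X ^ (m+2) + C a * X + C b)
      (C ((m : ℤ) + 2) * X ^ (m+1) + C a) (m+2) (m+1)).det
      = ((m : ℤ) + 2) ^ (m + 2) * b ^ (m + 1) + (1 - ((m : ℤ) + 2)) ^ (m + 1) * a ^ (m + 2) := by
    rw [← Matrix.det_submatrix_equiv_self (eqv m), sylv_blocks,
      Matrix.det_fromBlocks_one₁₁, schur, detNmat]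
  rw [hdet]
  have h1 : m + 2 - 1 = m + 1 := rfl
  rw [h1]
  push_cast
  ring
end

section
/- For every integer k ≥ 3, the polynomial x^{2^k} − 1 factors over F_3 as (x−1)(x−2)(x^2−2)(x^2−x−1)(x^2−2x−1) · Π over u ∈ {−1/2, 1/2} and 1 ≤ t ≤ k−3 of (x^{2^{t+1}} − 2u·x^{2^t} − 1), and each displayed factor is irreducible in F_3[x]. In particular, x^{2^k} − 1 has exactly 2 monic linear irreducible factors and exactly 3 monic quadratic irreducible factors over F_3 for every k ≥ 3. -/
open Polynomial Finset IntermediateField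

/-! ### Auxiliary number-theoretic lemmas -/

private lemma aux_lemC (w c : ℕ) (hw : 1 ≤ w) :
    ∀ m : ℕ, ∃ e, (1+2^w*c)^m = 1 + 2^w*e ∧ e % 2 = (m*c) % 2 := by
  intro m
  induction m with
  | zero => exact ⟨0, by simp⟩
  | succ n ih =>
    obtain ⟨e, he, hp⟩ := ih
    refine ⟨c + e + 2^w * c * e, by rw [pow_succ, he]; ring, ?_⟩
    have h2 : 2 ∣ 2^w * c * e := Dvd.dvd.mul_right (Dvd.dvd.mul_right (dvd_pow_self 2 (by omega)) c) e
    have h3 : (n+1)*c = n*c + c := by ring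
    omega

private lemma aux_lemA : ∀ v : ℕ, 1 ≤ v → ∃ c, c % 2 = 1 ∧ 3^(2^v) = 1 + 2^(v+2)*c := by
  intro v hv
  induction v with
  | zero => omega
  | succ n ih =>
    rcases Nat.eq_zero_or_pos n with rfl | h1
    · exact ⟨1, by norm_num, by norm_num⟩
    · obtain ⟨c, hc, he⟩ := ih h1
      refine ⟨c + 2^(n+1)*c^2, ?_, ?_⟩
      · have h2 : 2 ∣ 2^(n+1)*c^2 := Dvd.dvd.mul_right (dvd_pow_self 2 (by omega)) _
        omega
      · rw [pow_succ, pow_mul, he]; ring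

private lemma aux_lemB (t d : ℕ) (ht : 1 ≤ t) (hd : d ≠ 0) (h : 2^(t+3) ∣ 3^d - 1) :
    2^(t+1) ∣ d := by
  obtain ⟨v, m, hm2, rfl⟩ := Nat.exists_eq_pow_mul_and_not_dvd hd 2 (by norm_num)
  have hmodd : m % 2 = 1 := by omega
  rcases Nat.eq_zero_or_pos v with rfl | hv
  · exfalso
    obtain ⟨e, he, hp⟩ := aux_lemC 1 1 le_rfl m
    simp only [pow_one, mul_one] at he hp
    rw [pow_zero, one_mul, he] at h
    simp only [Nat.add_sub_cancel_left] at h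
    have h4 : (4:ℕ) ∣ 2 * e := dvd_trans (show (4:ℕ) ∣ 2^(t+3) from (pow_dvd_pow 2 (show 2 ≤ t+3 by omega) : 2^2 ∣ 2^(t+3))) h
    omega
  · obtain ⟨c, hc, he⟩ := aux_lemA v hv
    obtain ⟨e, hee, hp⟩ := aux_lemC (v+2) c (by omega) m
    rw [pow_mul, he, hee] at h
    simp only [Nat.add_sub_cancel_left] at h
    have heo : e % 2 = 1 := by
      have h4 : ¬ (2 ∣ m * c) := by
        intro hdv
        rcases (Nat.prime_two.dvd_mul).1 hdv with h5 | h5 <;> omega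
      rcases Nat.even_or_odd (m*c) with h3 | h3
      · exact absurd h3.two_dvd h4
      · have := Nat.odd_iff.1 h3; omega
    have hco : Nat.Coprime (2^(t+3)) e :=
      Nat.Coprime.pow_left _ ((Nat.prime_two.coprime_iff_not_dvd).2 (by omega))
    have h6 : 2^(t+3) ∣ 2^(v+2) := hco.dvd_of_dvd_mul_right h
    have h7 : t + 3 ≤ v + 2 := (Nat.pow_dvd_pow_iff_le_right (by norm_num)).1 h6
    exact dvd_mul_of_dvd_left (pow_dvd_pow 2 (by omega)) m

/-! ### Basic facts in `F_3[X]` -/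

private lemma aux_C2 : (C 2 : Polynomial (ZMod 3)) = 2 := map_ofNat C 2

private lemma aux_h3 : (3 : Polynomial (ZMod 3)) = 0 := by
  rw [← map_ofNat (C : ZMod 3 →+* Polynomial (ZMod 3)) 3, show (3:ZMod 3) = 0 by decide, map_zero]

private lemma aux_eq1 : (X ^ 2 - 2 : Polynomial (ZMod 3)) = X ^ 2 + C 0 * X + C 1 := by
  simp only [map_zero, map_one]
  linear_combination (-1 : Polynomial (ZMod 3)) * aux_h3

private lemma aux_eq2 : (X ^ 2 - X - 1 : Polynomial (ZMod 3)) = X ^ 2 + C 2 * X + C 2 := by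
  rw [aux_C2]; linear_combination (-X - 1 : Polynomial (ZMod 3)) * aux_h3

private lemma aux_eq3 : (X ^ 2 - 2 * X - 1 : Polynomial (ZMod 3)) = X ^ 2 + C 1 * X + C 2 := by
  rw [aux_C2, map_one]; linear_combination (-X - 1 : Polynomial (ZMod 3)) * aux_h3

private lemma aux_quadmonic (b c : ZMod 3) :
    (X ^ 2 + C b * X + C c : Polynomial (ZMod 3)).Monic := by
  rw [show (X ^ 2 + C b * X + C c : Polynomial (ZMod 3)) = X^2 + (C b * X + C c) by ring]
  exact monic_X_pow_add (lt_of_le_of_lt degree_linear_le (by norm_num))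

private lemma aux_quaddeg (b c : ZMod 3) :
    (X ^ 2 + C b * X + C c : Polynomial (ZMod 3)).natDegree = 2 := by
  compute_degree!

private lemma aux_quadirr (b c : ZMod 3) (h : ∀ a : ZMod 3, a^2 + b*a + c ≠ 0) :
    Irreducible (X ^ 2 + C b * X + C c : Polynomial (ZMod 3)) := by
  have hm := aux_quadmonic b c
  have hd := aux_quaddeg b c
  rw [hm.irreducible_iff_roots_eq_zero_of_degree_le_three (by omega) (by omega)]
  rw [Multiset.eq_zero_iff_forall_notMem]
  intro a ha
  rw [mem_roots hm.ne_zero] at ha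
  simp [IsRoot, eval_add, eval_pow] at ha
  exact h a (by linear_combination ha)

private lemma aux_lin1 : Irreducible (X - 1 : Polynomial (ZMod 3)) := by
  simpa using irreducible_X_sub_C (1 : ZMod 3)

private lemma aux_lin2 : Irreducible (X - 2 : Polynomial (ZMod 3)) := by
  have := irreducible_X_sub_C (2 : ZMod 3)
  rwa [aux_C2] at this

private lemma aux_irr1 : Irreducible (X ^ 2 - 2 : Polynomial (ZMod 3)) := by
  rw [aux_eq1]; exact aux_quadirr 0 1 (by decide)

private lemma aux_irr2 : Irreducible (X ^ 2 - X - 1 : Polynomial (ZMod 3)) := by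
  rw [aux_eq2]; exact aux_quadirr 2 2 (by decide)

private lemma aux_irr3 : Irreducible (X ^ 2 - 2 * X - 1 : Polynomial (ZMod 3)) := by
  rw [aux_eq3]; exact aux_quadirr 1 2 (by decide)

/-! ### The factorization -/

private lemma aux_step (t : ℕ) :
    ∏ u ∈ ({1, 2} : Finset (ZMod 3)), (X ^ (2 ^ (t + 1)) - C (2 * u) * X ^ (2 ^ t) - 1)
      = X ^ (2 ^ (t + 2)) + 1 := by
  rw [Finset.prod_pair (by decide)]
  have e1 : (2 * 1 : ZMod 3) = 2 := by decide
  have e2 : (2 * 2 : ZMod 3) = 1 := by decide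
  rw [e1, e2, aux_C2, map_one]
  have p1 : (2:ℕ) ^ (t+1) = 2^t * 2 := by ring
  have p2 : (2:ℕ) ^ (t+2) = 2^t * 4 := by ring
  rw [p1, p2, pow_mul, pow_mul]
  linear_combination (X^(2^t) - (X^(2^t))^3) * aux_h3

private lemma aux_factorization (k : ℕ) (hk : 3 ≤ k) :
    (X ^ (2 ^ k) - 1 : Polynomial (ZMod 3)) =
      (X - 1) * (X - 2) * (X ^ 2 - 2) * (X ^ 2 - X - 1) * (X ^ 2 - 2 * X - 1) *
        ∏ t ∈ Finset.Icc 1 (k - 3), ∏ u ∈ ({1, 2} : Finset (ZMod 3)),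
          (X ^ (2 ^ (t + 1)) - C (2 * u) * X ^ (2 ^ t) - 1) := by
  induction k with
  | zero => omega
  | succ n ih =>
    rcases Nat.lt_or_ge n 3 with h1 | h1
    · have hn : n = 2 := by omega
      subst hn
      norm_num
      linear_combination (1 + 2*X - 6*X^2 - 3*X^3 + 10*X^4 - 3*X^5 - 3*X^6 + 2*X^7 :
        Polynomial (ZMod 3)) * aux_h3
    · have ihh := ih h1
      have hsplit : (X ^ (2 ^ (n+1)) - 1 : Polynomial (ZMod 3))
          = (X ^ (2 ^ n) - 1) * (X ^ (2 ^ n) + 1) := by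
        rw [show (2:ℕ)^(n+1) = 2^n * 2 by ring, pow_mul]
        ring
      have hicc : n + 1 - 3 = (n - 3) + 1 := by omega
      rw [hsplit, ihh, hicc, Finset.prod_Icc_succ_top (by omega)]
      rw [show n - 3 + 1 = n - 2 by omega, aux_step, show n - 2 + 2 = n by omega]
      ring

/-! ### Irreducibility of the high-degree factors -/

private lemma aux_famIrr (t : ℕ) (ht : 1 ≤ t) (e : ZMod 3) (he : e ≠ 0) :
    Irreducible (X ^ (2^(t+1)) - C e * X ^ (2^t) - 1 : Polynomial (ZMod 3)) := by
  set f : Polynomial (ZMod 3) := X ^ (2^(t+1)) - C e * X ^ (2^t) - 1 with hf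
  have hmlt : (2:ℕ)^t < 2^(t+1) := Nat.pow_lt_pow_right (by norm_num) (by omega)
  have hsplit : f = X ^ (2^(t+1)) + (-(C e * X ^ (2^t)) - 1) := by rw [hf]; ring
  have hplt : (-(C e * X ^ (2^t)) - 1 : Polynomial (ZMod 3)).degree
      < ((2^(t+1) : ℕ) : WithBot ℕ) := by
    apply lt_of_le_of_lt (degree_sub_le _ _)
    rw [max_lt_iff, degree_neg]
    constructor
    · apply lt_of_le_of_lt (degree_mul_le _ _)
      apply lt_of_le_of_lt (add_le_add degree_C_le (degree_X_pow _).le)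
      rw [zero_add]
      exact_mod_cast hmlt
    · apply lt_of_le_of_lt degree_one_le
      exact_mod_cast pow_pos (by norm_num : (0:ℕ) < 2) (t+1)
  have hm : f.Monic := by rw [hsplit]; exact monic_X_pow_add hplt
  have hdegf : f.degree = ((2^(t+1) : ℕ) : WithBot ℕ) := by
    rw [hsplit, degree_add_eq_left_of_degree_lt (by rwa [degree_X_pow]), degree_X_pow]
  have hndegf : f.natDegree = 2^(t+1) := natDegree_eq_of_degree_eq_some hdegf
  have hf0 : f ≠ 0 := hm.ne_zero
  set L := f.SplittingField
  obtain ⟨α, hα⟩ := (SplittingField.splits f).exists_eval_eq_zero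
    (by rw [degree_map, hdegf]; exact_mod_cast (pow_pos (by norm_num : (0:ℕ) < 2) (t+1)).ne')
  have haev : (aeval α) f = 0 := by rwa [aeval_def, ← eval_map]
  haveI : CharP L 3 := charP_of_injective_algebraMap (algebraMap (ZMod 3) L).injective 3
  set ε : L := algebraMap (ZMod 3) L e with hε
  have he2 : e^2 = 1 := by
    have hall : ∀ x : ZMod 3, x ≠ 0 → x^2 = 1 := by decide
    exact hall e he
  have hε2 : ε^2 = 1 := by rw [hε, ← map_pow, he2, map_one]
  have h3L : (3 : L) = 0 := by exact_mod_cast CharP.cast_eq_zero L 3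
  have hroot : α ^ (2^(t+1)) - ε * α ^ (2^t) - 1 = 0 := by
    simpa [hf, hε] using haev
  have hy4 : α ^ (2^(t+2)) = -1 := by
    have p1 : (2:ℕ) ^ (t+1) = 2^t * 2 := by ring
    have p2 : (2:ℕ) ^ (t+2) = 2^t * 4 := by ring
    rw [p1, pow_mul] at hroot
    rw [p2, pow_mul]
    set y := α ^ (2^t)
    linear_combination (y^2 + ε*y - 1) * hroot + y^2 * hε2 + y^2 * h3L
  have hne : (-1 : L) ≠ 1 := by
    haveI : Fact (2 < 3) := ⟨by norm_num⟩
    exact CharP.neg_one_ne_one L 3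
  have hα0 : α ≠ 0 := by
    intro h0
    rw [h0, zero_pow (by positivity)] at hy4
    exact hne (by linear_combination (-2 : L) * hy4)
  have hord : orderOf α = 2^(t+3) := by
    have h1 : α ^ (2^(t+3)) = 1 := by
      rw [show (2:ℕ)^(t+3) = 2^(t+2) * 2 by ring, pow_mul, hy4]; ring
    have hdvd : orderOf α ∣ 2^(t+3) := orderOf_dvd_of_pow_eq_one h1
    obtain ⟨s, hs, hos⟩ := (Nat.dvd_prime_pow Nat.prime_two).1 hdvd
    rcases Nat.lt_or_ge s (t+3) with hlt | hge
    · exfalso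
      have : α ^ (2^(t+2)) = 1 := by
        apply orderOf_dvd_iff_pow_eq_one.1
        rw [hos]
        exact pow_dvd_pow 2 (by omega)
      rw [hy4] at this
      exact hne this
    · rw [hos]; congr 1; omega
  have hint : IsIntegral (ZMod 3) α := .of_finite _ _
  set d := (minpoly (ZMod 3) α).natDegree with hd
  have hdpos : 0 < d := minpoly.natDegree_pos hint
  have hkey : α ^ (3^d) = α := by
    haveI hFD : FiniteDimensional (ZMod 3) (ZMod 3)⟮α⟯ :=
      IntermediateField.adjoin.finiteDimensional hint
    have hfr : Module.finrank (ZMod 3) (ZMod 3)⟮α⟯ = d := IntermediateField.adjoin.finrank hint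
    haveI : Finite ((ZMod 3)⟮α⟯) := Module.finite_of_finite (ZMod 3)
    haveI : Fintype ((ZMod 3)⟮α⟯) := Fintype.ofFinite _
    have hcard : Fintype.card ((ZMod 3)⟮α⟯) = 3^d := by
      rw [Module.card_eq_pow_finrank (K := ZMod 3), ZMod.card, hfr]
    have := FiniteField.pow_card (IntermediateField.AdjoinSimple.gen (ZMod 3) α)
    rw [hcard] at this
    have hco := congrArg (algebraMap ((ZMod 3)⟮α⟯) L) this
    rwa [map_pow, IntermediateField.AdjoinSimple.algebraMap_gen] at hco
  have hαsub : α ^ (3^d - 1) = 1 := by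
    have h1 : α ^ (3^d - 1) * α = 1 * α := by
      rw [one_mul, ← pow_succ, Nat.sub_add_cancel (Nat.one_le_pow _ _ (by norm_num)), hkey]
    exact mul_right_cancel₀ hα0 h1
  have hdvd2 : 2^(t+3) ∣ 3^d - 1 := hord ▸ orderOf_dvd_of_pow_eq_one hαsub
  have hddvd : 2^(t+1) ∣ d := aux_lemB t d ht hdpos.ne' hdvd2
  have hmindvd : minpoly (ZMod 3) α ∣ f := minpoly.dvd _ _ haev
  have hdle : d ≤ 2^(t+1) := hndegf ▸ natDegree_le_of_dvd hmindvd hf0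
  have hdeq : d = 2^(t+1) := Nat.le_antisymm hdle (Nat.le_of_dvd hdpos hddvd)
  obtain ⟨q, hq⟩ := hmindvd
  have hmp : (minpoly (ZMod 3) α).Monic := minpoly.monic hint
  have hq0 : q ≠ 0 := by rintro rfl; rw [mul_zero] at hq; exact hf0 hq
  have hqdeg : q.natDegree = 0 := by
    have := natDegree_mul hmp.ne_zero hq0
    rw [← hq, hndegf, ← hd, hdeq] at this
    omega
  have hqC : q = C (q.coeff 0) := eq_C_of_natDegree_eq_zero hqdeg
  have hl := congrArg leadingCoeff hq
  rw [leadingCoeff_mul, hm.leadingCoeff, hmp.leadingCoeff, one_mul] at hl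
  rw [hqC, leadingCoeff_C] at hl
  have hq1 : q = 1 := by rw [hqC, ← hl, map_one]
  have hfeq : f = minpoly (ZMod 3) α := hq.trans (by rw [hq1, mul_one])
  rw [hfeq]
  exact minpoly.irreducible hint

private lemma aux_quadform (g : Polynomial (ZMod 3)) (hm : g.Monic) (hd : g.natDegree = 2) :
    g = X ^ 2 + C (g.coeff 1) * X + C (g.coeff 0) := by
  have h := as_sum_range_C_mul_X_pow g
  rw [hd] at h
  have h2 : g.coeff 2 = 1 := by
    have := hm.leadingCoeff
    rwa [Polynomial.leadingCoeff, hd] at this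
  rw [show range (2+1) = {0, 1, 2} by rfl] at h
  rw [Finset.sum_insert (by decide), Finset.sum_insert (by decide), Finset.sum_singleton] at h
  rw [h, h2]
  simp
  ring

/-- For `k ≥ 3`, the factorization of `x^{2^k} - 1` over `F_3` into monic irreducible
factors (identifying `1/2 = 2` and `-1/2 = 1` in `F_3`), each displayed factor being
irreducible; in particular `x^{2^k} - 1` has exactly `2` monic linear and exactly `3`
monic quadratic irreducible factors over `F_3`. -/
theorem pow_two_pow_sub_one_factorization_mod_three (k : ℕ) (hk : 3 ≤ k) :
    ((X ^ (2 ^ k) - 1 : Polynomial (ZMod 3)) =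
        (X - 1) * (X - 2) * (X ^ 2 - 2) * (X ^ 2 - X - 1) * (X ^ 2 - 2 * X - 1) *
          ∏ t ∈ Finset.Icc 1 (k - 3), ∏ u ∈ ({1, 2} : Finset (ZMod 3)),
            (X ^ (2 ^ (t + 1)) - C (2 * u) * X ^ (2 ^ t) - 1)) ∧
      Irreducible (X - 1 : Polynomial (ZMod 3)) ∧
      Irreducible (X - 2 : Polynomial (ZMod 3)) ∧
      Irreducible (X ^ 2 - 2 : Polynomial (ZMod 3)) ∧
      Irreducible (X ^ 2 - X - 1 : Polynomial (ZMod 3)) ∧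
      Irreducible (X ^ 2 - 2 * X - 1 : Polynomial (ZMod 3)) ∧
      (∀ t ∈ Finset.Icc 1 (k - 3), ∀ u ∈ ({1, 2} : Finset (ZMod 3)),
        Irreducible (X ^ (2 ^ (t + 1)) - C (2 * u) * X ^ (2 ^ t) - 1 :
          Polynomial (ZMod 3))) ∧
      Nat.card {g : Polynomial (ZMod 3) // g.Monic ∧ Irreducible g ∧ g.natDegree = 1 ∧
        g ∣ (X ^ (2 ^ k) - 1)} = 2 ∧
      Nat.card {g : Polynomial (ZMod 3) // g.Monic ∧ Irreducible g ∧ g.natDegree = 2 ∧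
        g ∣ (X ^ (2 ^ k) - 1)} = 3 := by
  have hfac := aux_factorization k hk
  set P : Polynomial (ZMod 3) := X ^ (2 ^ k) - 1 with hP
  -- divisibility of the five explicit factors
  have hd1 : (X - 1 : Polynomial (ZMod 3)) ∣ P :=
    ⟨(X - 2) * (X ^ 2 - 2) * (X ^ 2 - X - 1) * (X ^ 2 - 2 * X - 1) *
      ∏ t ∈ Finset.Icc 1 (k - 3), ∏ u ∈ ({1, 2} : Finset (ZMod 3)),
        (X ^ (2 ^ (t + 1)) - C (2 * u) * X ^ (2 ^ t) - 1), hfac.trans (by ring)⟩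
  have hd2 : (X - 2 : Polynomial (ZMod 3)) ∣ P :=
    ⟨(X - 1) * (X ^ 2 - 2) * (X ^ 2 - X - 1) * (X ^ 2 - 2 * X - 1) *
      ∏ t ∈ Finset.Icc 1 (k - 3), ∏ u ∈ ({1, 2} : Finset (ZMod 3)),
        (X ^ (2 ^ (t + 1)) - C (2 * u) * X ^ (2 ^ t) - 1), hfac.trans (by ring)⟩
  have hd3 : (X ^ 2 - 2 : Polynomial (ZMod 3)) ∣ P :=
    ⟨(X - 1) * (X - 2) * (X ^ 2 - X - 1) * (X ^ 2 - 2 * X - 1) *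
      ∏ t ∈ Finset.Icc 1 (k - 3), ∏ u ∈ ({1, 2} : Finset (ZMod 3)),
        (X ^ (2 ^ (t + 1)) - C (2 * u) * X ^ (2 ^ t) - 1), hfac.trans (by ring)⟩
  have hd4 : (X ^ 2 - X - 1 : Polynomial (ZMod 3)) ∣ P :=
    ⟨(X - 1) * (X - 2) * (X ^ 2 - 2) * (X ^ 2 - 2 * X - 1) *
      ∏ t ∈ Finset.Icc 1 (k - 3), ∏ u ∈ ({1, 2} : Finset (ZMod 3)),
        (X ^ (2 ^ (t + 1)) - C (2 * u) * X ^ (2 ^ t) - 1), hfac.trans (by ring)⟩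
  have hd5 : (X ^ 2 - 2 * X - 1 : Polynomial (ZMod 3)) ∣ P :=
    ⟨(X - 1) * (X - 2) * (X ^ 2 - 2) * (X ^ 2 - X - 1) *
      ∏ t ∈ Finset.Icc 1 (k - 3), ∏ u ∈ ({1, 2} : Finset (ZMod 3)),
        (X ^ (2 ^ (t + 1)) - C (2 * u) * X ^ (2 ^ t) - 1), hfac.trans (by ring)⟩
  have hk0 : (2:ℕ)^k ≠ 0 := by positivity
  -- characterization of monic linear irreducible divisors
  have hchar1 : ∀ g : Polynomial (ZMod 3),
      (g.Monic ∧ Irreducible g ∧ g.natDegree = 1 ∧ g ∣ P) ↔ (g = X - 1 ∨ g = X - 2) := by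
    intro g
    constructor
    · rintro ⟨hm, -, hdeg, hdvd⟩
      have hG : g = X + C (g.coeff 0) := hm.eq_X_add_C hdeg
      have hG' : g = X - C (-(g.coeff 0)) := by rw [map_neg, sub_neg_eq_add, ← hG]
      rw [hG', dvd_iff_isRoot] at hdvd
      have hev : (-(g.coeff 0))^(2^k) - 1 = 0 := by
        simpa [hP, IsRoot] using hdvd
      rcases (show ∀ x : ZMod 3, x = 0 ∨ x = 1 ∨ x = 2 by decide) (g.coeff 0) with h|h|h
      · exfalso
        rw [h] at hev
        simp [zero_pow hk0] at hev
      · right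
        rw [hG, h, map_one]
        linear_combination aux_h3
      · left
        rw [hG, h, aux_C2]
        linear_combination aux_h3
    · rintro (rfl | rfl)
      · exact ⟨by simpa using monic_X_sub_C (1 : ZMod 3), aux_lin1,
          by simpa using natDegree_X_sub_C (1 : ZMod 3), hd1⟩
      · refine ⟨?_, aux_lin2, ?_, hd2⟩
        · have := monic_X_sub_C (2 : ZMod 3); rwa [aux_C2] at this
        · have := natDegree_X_sub_C (2 : ZMod 3); rwa [aux_C2] at this
  -- characterization of monic quadratic irreducible divisors
  have hchar2 : ∀ g : Polynomial (ZMod 3),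
      (g.Monic ∧ Irreducible g ∧ g.natDegree = 2 ∧ g ∣ P) ↔
        (g = X ^ 2 - 2 ∨ g = X ^ 2 - X - 1 ∨ g = X ^ 2 - 2 * X - 1) := by
    intro g
    constructor
    · rintro ⟨hm, hirr, hdeg, -⟩
      have hG := aux_quadform g hm hdeg
      have hroots : g.roots = 0 :=
        (hm.irreducible_iff_roots_eq_zero_of_degree_le_three (by omega) (by omega)).1 hirr
      have hnoroot : ∀ a : ZMod 3, a^2 + g.coeff 1 * a + g.coeff 0 ≠ 0 := by
        intro a ha
        have : a ∈ g.roots := by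
          rw [mem_roots hm.ne_zero]
          rw [hG]
          simp [IsRoot]
          linear_combination ha
        rw [hroots] at this
        simpa using this
      have hbc : (g.coeff 1 = 0 ∧ g.coeff 0 = 1) ∨ (g.coeff 1 = 2 ∧ g.coeff 0 = 2) ∨
          (g.coeff 1 = 1 ∧ g.coeff 0 = 2) := by
        rcases (show ∀ b c : ZMod 3, (∀ a : ZMod 3, a^2 + b*a + c ≠ 0) →
          ((b = 0 ∧ c = 1) ∨ (b = 2 ∧ c = 2) ∨ (b = 1 ∧ c = 2)) by decide)
          (g.coeff 1) (g.coeff 0) hnoroot with h | h | h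
        · exact Or.inl h
        · exact Or.inr (Or.inl h)
        · exact Or.inr (Or.inr h)
      rcases hbc with ⟨hb, hc⟩ | ⟨hb, hc⟩ | ⟨hb, hc⟩
      · left; rw [hG, hb, hc, ← aux_eq1]
      · right; left; rw [hG, hb, hc, ← aux_eq2]
      · right; right; rw [hG, hb, hc, ← aux_eq3]
    · rintro (rfl | rfl | rfl)
      · exact ⟨by rw [aux_eq1]; exact aux_quadmonic 0 1, aux_irr1,
          by rw [aux_eq1]; exact aux_quaddeg 0 1, hd3⟩
      · exact ⟨by rw [aux_eq2]; exact aux_quadmonic 2 2, aux_irr2,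
          by rw [aux_eq2]; exact aux_quaddeg 2 2, hd4⟩
      · exact ⟨by rw [aux_eq3]; exact aux_quadmonic 1 2, aux_irr3,
          by rw [aux_eq3]; exact aux_quaddeg 1 2, hd5⟩
  have hne12 : (X - 1 : Polynomial (ZMod 3)) ≠ X - 2 := by
    intro h
    have := congrArg (eval 0) h
    simp at this
    exact (by decide : ¬ (1 : ZMod 3) = 2) this
  refine ⟨hfac, aux_lin1, aux_lin2, aux_irr1, aux_irr2, aux_irr3, ?_, ?_, ?_⟩
  · intro t htmem u humem
    have ht1 : 1 ≤ t := (Finset.mem_Icc.1 htmem).1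
    have hu : u = 1 ∨ u = 2 := by
      rcases Finset.mem_insert.1 humem with h | h
      · exact Or.inl h
      · exact Or.inr (Finset.mem_singleton.1 h)
    have hune : (2 * u : ZMod 3) ≠ 0 := by rcases hu with rfl | rfl <;> decide
    exact aux_famIrr t ht1 (2 * u) hune
  · have hequiv : {g : Polynomial (ZMod 3) // g.Monic ∧ Irreducible g ∧ g.natDegree = 1 ∧
        g ∣ P} ≃ (({X - 1, X - 2} : Set (Polynomial (ZMod 3)))) :=
      Equiv.subtypeEquivRight (fun g => by rw [hchar1 g]; simp)
    rw [Nat.card_congr hequiv, Nat.card_coe_set_eq, Set.ncard_pair hne12]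
  · have hne13 : (X ^ 2 - 2 : Polynomial (ZMod 3)) ≠ X ^ 2 - X - 1 := by
      intro h
      have := congrArg (eval 0) h
      simp at this
      exact (by decide : ¬ (2 : ZMod 3) = 1) this
    have hne14 : (X ^ 2 - 2 : Polynomial (ZMod 3)) ≠ X ^ 2 - 2 * X - 1 := by
      intro h
      have := congrArg (eval 0) h
      simp at this
      exact (by decide : ¬ (2 : ZMod 3) = 1) this
    have hne34 : (X ^ 2 - X - 1 : Polynomial (ZMod 3)) ≠ X ^ 2 - 2 * X - 1 := by
      intro h
      have := congrArg (eval 1) h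
      simp at this
      exact (by decide : ¬ (1 : ZMod 3) = 2) this
    have hequiv : {g : Polynomial (ZMod 3) // g.Monic ∧ Irreducible g ∧ g.natDegree = 2 ∧
        g ∣ P} ≃ (({X ^ 2 - 2, X ^ 2 - X - 1, X ^ 2 - 2 * X - 1} :
          Set (Polynomial (ZMod 3)))) :=
      Equiv.subtypeEquivRight (fun g => by rw [hchar2 g]; simp)
    rw [Nat.card_congr hequiv, Nat.card_coe_set_eq]
    rw [Set.ncard_insert_of_notMem (by simp [hne13, hne14]), Set.ncard_pair hne34]
end

section
/- Let p be a prime, v ≥ u ≥ 2 integers with gcd(u, p) = 1, and a, b integers with p ∤ ab. Then the trinomial F(x) = x^{p^r} + p^v·a·x + p^u·b is irreducible over ℚ. -/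
open Polynomial

/-- The Newton-polygon weight `p^r·v_p(coeff f i) + u·i` in `ℕ∞`. -/
noncomputable def Wt (p r u : ℕ) (f : Polynomial ℤ) (i : ℕ) : ℕ∞ :=
  ((p ^ r : ℕ) : ℕ∞) * emultiplicity (p : ℤ) (f.coeff i) + ((u * i : ℕ) : ℕ∞)

lemma wt_top (p r u : ℕ) (hp : p.Prime) (f : Polynomial ℤ) (i : ℕ) (h : f.coeff i = 0) :
    Wt p r u f i = ⊤ := by
  have h1 : ((p : ℕ∞) ^ r) ≠ 0 := pow_ne_zero _ (by exact_mod_cast hp.ne_zero)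
  simp [Wt, h, emultiplicity_zero, WithTop.mul_top h1]
  exact Or.inl (WithTop.mul_top h1)

lemma wt_eq (p r u : ℕ) (f : Polynomial ℤ) (i : ℕ) (x : ℕ)
    (h : emultiplicity (p : ℤ) (f.coeff i) = x) :
    Wt p r u f i = ((p ^ r * x + u * i : ℕ) : ℕ∞) := by
  rw [Wt, h]
  push_cast
  ring

lemma em_ne_top (p r u : ℕ) (hp : p.Prime) (f : Polynomial ℤ) (i : ℕ)
    (h : Wt p r u f i ≠ ⊤) : emultiplicity (p : ℤ) (f.coeff i) ≠ ⊤ := by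
  intro h'
  apply h
  have h1 : ((p : ℕ∞) ^ r) ≠ 0 := pow_ne_zero _ (by exact_mod_cast hp.ne_zero)
  simp [Wt, h', WithTop.mul_top h1]
  exact Or.inl (WithTop.mul_top h1)

lemma coeff_ne_zero_of_wt_ne_top (p r u : ℕ) (hp : p.Prime) (f : Polynomial ℤ) (i : ℕ)
    (h : Wt p r u f i ≠ ⊤) : f.coeff i ≠ 0 :=
  fun h' => h (wt_top p r u hp f i h')

/-- Existence of a minimal-weight coefficient index (least such index), with the
associated data. -/
lemma minWt (p r u : ℕ) (hp : p.Prime) (G : Polynomial ℤ) (hG : G.Monic) :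
    ∃ (i0 c : ℕ),
      emultiplicity (p : ℤ) (G.coeff i0) = (c : ℕ∞) ∧
      (∀ i, ((p ^ r * c + u * i0 : ℕ) : ℕ∞) ≤ Wt p r u G i) ∧
      (∀ i, i < i0 → ((p ^ r * c + u * i0 : ℕ) : ℕ∞) < Wt p r u G i) ∧
      p ^ r * c + u * i0 ≤ u * G.natDegree := by
  set m := G.natDegree with hm
  have hlead : emultiplicity (p : ℤ) (G.coeff m) = ((0 : ℕ) : ℕ∞) := by
    rw [hG.coeff_natDegree, Nat.cast_zero, emultiplicity_eq_zero]
    exact (Nat.prime_iff_prime_int.1 hp).not_dvd_one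
  have hWm : Wt p r u G m = ((u * m : ℕ) : ℕ∞) := by
    rw [wt_eq p r u G m 0 hlead]; norm_num
  set μ := (Finset.range (m + 1)).inf (Wt p r u G) with hμ
  have hle : ∀ i, μ ≤ Wt p r u G i := by
    intro i
    by_cases hi : i ≤ m
    · exact Finset.inf_le (Finset.mem_range.2 (Nat.lt_succ_of_le hi))
    · rw [wt_top p r u hp G i (coeff_eq_zero_of_natDegree_lt (lt_of_not_ge hi))]
      exact le_top
  have hμm : μ ≤ ((u * m : ℕ) : ℕ∞) := hWm ▸ hle m
  have hμtop : μ ≠ ⊤ := ne_top_of_le_ne_top (WithTop.natCast_ne_top _) hμm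
  have hex : ∃ i, Wt p r u G i = μ := by
    obtain ⟨i, _, h⟩ := Finset.exists_mem_eq_inf (Finset.range (m + 1))
      ⟨0, by simp⟩ (Wt p r u G)
    exact ⟨i, h.symm⟩
  classical
  set i0 := Nat.find hex with hi0
  have hWi0 : Wt p r u G i0 = μ := Nat.find_spec hex
  obtain ⟨c, hc⟩ : ∃ c : ℕ, emultiplicity (p : ℤ) (G.coeff i0) = (c : ℕ∞) := by
    have := em_ne_top p r u hp G i0 (hWi0 ▸ hμtop)
    exact ⟨(emultiplicity (p : ℤ) (G.coeff i0)).untop this,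
      (WithTop.coe_untop _ this).symm⟩
  have hμeq : μ = ((p ^ r * c + u * i0 : ℕ) : ℕ∞) := by
    rw [← hWi0, wt_eq p r u G i0 c hc]
  refine ⟨i0, c, hc, ?_, ?_, ?_⟩
  · intro i; rw [← hμeq]; exact hle i
  · intro i hilt
    rw [← hμeq]
    exact lt_of_le_of_ne (hle i) (fun h => Nat.find_min hex hilt h.symm)
  · exact_mod_cast hμeq ▸ hμm

/-- Key lemma: if all coefficients of `G*H` lie on or above the line of slope
`-u/p^r` through `(0, u·(m+n))`, and `G, H` are monic, then the coefficients of `G`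
lie above the corresponding line for `G`. -/
lemma keyA (p : ℕ) (hp : p.Prime) (r u q : ℕ) (G H : Polynomial ℤ)
    (hG : G.Monic) (hH : H.Monic) (hq : G.natDegree + H.natDegree = q)
    (hF : ∀ k, ((u * q : ℕ) : ℕ∞) ≤ Wt p r u (G * H) k) :
    ∀ i, ((u * G.natDegree : ℕ) : ℕ∞) ≤ Wt p r u G i := by
  classical
  by_contra hcon
  push_neg at hcon
  obtain ⟨iw, hiw⟩ := hcon
  set m := G.natDegree with hm
  set n := H.natDegree with hn
  have hpZ : Prime ((p : ℤ)) := Nat.prime_iff_prime_int.1 hp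
  obtain ⟨i0, cG, hcG, hGle, hGlt, _⟩ := minWt p r u hp G hG
  obtain ⟨j0, cH, hcH, hHle, hHlt, hHbd⟩ := minWt p r u hp H hH
  -- strict bound for G's minimum
  have hGbd : p ^ r * cG + u * i0 < u * m := by
    have := (hGle iw).trans_lt hiw
    exact_mod_cast this
  set k := i0 + j0 with hk
  set c := cG + cH with hcdef
  -- all off-diagonal terms are divisible by p^(c+1)
  have hterm : ∀ ij ∈ Finset.HasAntidiagonal.antidiagonal k, ij ≠ (i0, j0) →
      (p : ℤ) ^ (c + 1) ∣ G.coeff ij.1 * H.coeff ij.2 := by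
    rintro ⟨i, j⟩ hmem hne
    rw [Finset.HasAntidiagonal.mem_antidiagonal] at hmem
    apply pow_dvd_of_le_emultiplicity
    rw [emultiplicity_mul hpZ]
    rcases eq_or_ne (emultiplicity (p : ℤ) (G.coeff i)) ⊤ with hx | hx
    · rw [hx]; simp
    rcases eq_or_ne (emultiplicity (p : ℤ) (H.coeff j)) ⊤ with hy | hy
    · rw [hy]; simp
    obtain ⟨x, hxe⟩ : ∃ x : ℕ, emultiplicity (p : ℤ) (G.coeff i) = (x : ℕ∞) :=
      ⟨_, (WithTop.coe_untop _ hx).symm⟩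
    obtain ⟨y, hye⟩ : ∃ y : ℕ, emultiplicity (p : ℤ) (H.coeff j) = (y : ℕ∞) :=
      ⟨_, (WithTop.coe_untop _ hy).symm⟩
    rw [hxe, hye]
    have hne' : ¬(i = i0 ∧ j = j0) := by
      intro ⟨h1, h2⟩; exact hne (by rw [h1, h2])
    have hij : i < i0 ∨ j < j0 := by omega
    have hxy : c + 1 ≤ x + y := by
      rcases hij with hi | hj
      · have h1 := hGlt i hi
        have h2 := hHle j
        rw [wt_eq p r u G i x hxe] at h1
        rw [wt_eq p r u H j y hye] at h2
        have h1' : p ^ r * cG + u * i0 < p ^ r * x + u * i := by exact_mod_cast h1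
        have h2' : p ^ r * cH + u * j0 ≤ p ^ r * y + u * j := by exact_mod_cast h2
        by_contra hcon2
        push_neg at hcon2
        have hxyc : x + y ≤ c := by omega
        have hmul : p ^ r * x + p ^ r * y ≤ p ^ r * cG + p ^ r * cH := by
          calc p ^ r * x + p ^ r * y = p ^ r * (x + y) := by ring
            _ ≤ p ^ r * (cG + cH) := Nat.mul_le_mul_left _ hxyc
            _ = p ^ r * cG + p ^ r * cH := by ring
        have hiu : u * i + u * j = u * i0 + u * j0 := by
          rw [← Nat.mul_add, ← Nat.mul_add, hmem]
        have hsum := Nat.add_lt_add_of_lt_of_le h1' h2'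
        -- linear arithmetic over the atoms
        generalize p ^ r * cG = A at *
        generalize p ^ r * cH = B at *
        generalize p ^ r * x = X at *
        generalize p ^ r * y = Y at *
        generalize u * i0 = I at *
        generalize u * j0 = J at *
        generalize u * i = I' at *
        generalize u * j = J' at *
        omega
      · have h1 := hGle i
        have h2 := hHlt j hj
        rw [wt_eq p r u G i x hxe] at h1
        rw [wt_eq p r u H j y hye] at h2
        have h1' : p ^ r * cG + u * i0 ≤ p ^ r * x + u * i := by exact_mod_cast h1
        have h2' : p ^ r * cH + u * j0 < p ^ r * y + u * j := by exact_mod_cast h2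
        by_contra hcon2
        push_neg at hcon2
        have hxyc : x + y ≤ c := by omega
        have hmul : p ^ r * x + p ^ r * y ≤ p ^ r * cG + p ^ r * cH := by
          calc p ^ r * x + p ^ r * y = p ^ r * (x + y) := by ring
            _ ≤ p ^ r * (cG + cH) := Nat.mul_le_mul_left _ hxyc
            _ = p ^ r * cG + p ^ r * cH := by ring
        have hiu : u * i + u * j = u * i0 + u * j0 := by
          rw [← Nat.mul_add, ← Nat.mul_add, hmem]
        have hsum := Nat.add_lt_add_of_lt_of_le h2' h1'
        generalize p ^ r * cG = A at *
        generalize p ^ r * cH = B at *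
        generalize p ^ r * x = X at *
        generalize p ^ r * y = Y at *
        generalize u * i0 = I at *
        generalize u * j0 = J at *
        generalize u * i = I' at *
        generalize u * j = J' at *
        omega
    exact_mod_cast (Nat.cast_le (α := ℕ∞)).2 hxy
  -- the main term is not divisible by p^(c+1)
  have hmain : ¬ (p : ℤ) ^ (c + 1) ∣ G.coeff i0 * H.coeff j0 := by
    apply not_pow_dvd_of_emultiplicity_lt
    rw [emultiplicity_mul hpZ, hcG, hcH]
    exact_mod_cast Nat.lt_succ_self c
  -- hence p^(c+1) does not divide the coefficient of G*H at k
  have hmem0 : ((i0, j0) : ℕ × ℕ) ∈ Finset.HasAntidiagonal.antidiagonal k := by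
    rw [Finset.HasAntidiagonal.mem_antidiagonal]
  have hfk_not : ¬ (p : ℤ) ^ (c + 1) ∣ (G * H).coeff k := by
    rw [coeff_mul]
    intro hdvd
    rw [← Finset.add_sum_erase _ _ hmem0] at hdvd
    have hrest : (p : ℤ) ^ (c + 1) ∣
        ∑ ij ∈ (Finset.HasAntidiagonal.antidiagonal k).erase (i0, j0), G.coeff ij.1 * H.coeff ij.2 :=
      Finset.dvd_sum fun ij hij =>
        hterm ij (Finset.mem_of_mem_erase hij) (Finset.ne_of_mem_erase hij)
    exact hmain (by simpa using dvd_sub hdvd hrest)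
  -- so the emultiplicity of (G*H).coeff k is at most c
  have hfk_lt : emultiplicity (p : ℤ) ((G * H).coeff k) < ((c + 1 : ℕ) : ℕ∞) :=
    emultiplicity_lt_iff_not_dvd.2 hfk_not
  obtain ⟨e, he⟩ : ∃ e : ℕ, emultiplicity (p : ℤ) ((G * H).coeff k) = (e : ℕ∞) :=
    ⟨_, (WithTop.coe_untop _ (hfk_lt.trans_le le_top).ne).symm⟩
  have he_le : e ≤ c := by
    rw [he] at hfk_lt
    exact_mod_cast Nat.lt_succ_iff.1 (by exact_mod_cast hfk_lt)
  -- contradiction with hF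
  have hWF : Wt p r u (G * H) k = ((p ^ r * e + u * k : ℕ) : ℕ∞) :=
    wt_eq p r u (G * H) k e he
  have hlow : p ^ r * e + u * k < u * q := by
    have h1 : p ^ r * e ≤ p ^ r * c := Nat.mul_le_mul_left _ he_le
    have h2 : p ^ r * c + u * k = (p ^ r * cG + u * i0) + (p ^ r * cH + u * j0) := by
      rw [hcdef, hk]; ring
    have h4 : u * m + u * n = u * q := by rw [← Nat.mul_add, hq]
    calc p ^ r * e + u * k ≤ p ^ r * c + u * k := Nat.add_le_add_right h1 _
      _ = (p ^ r * cG + u * i0) + (p ^ r * cH + u * j0) := h2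
      _ < u * m + u * n := Nat.add_lt_add_of_lt_of_le hGbd hHbd
      _ = u * q := h4
  have := hF k
  rw [hWF] at this
  exact absurd (Nat.cast_le.1 this) (Nat.not_le.2 hlow)

/-- No nontrivial monic factorization of the trinomial. -/
lemma step2 (p : ℕ) (hp : p.Prime) (r u v : ℕ) (hr : 0 < r)
    (hu : 2 ≤ u) (huv : u ≤ v) (hgcd : Nat.gcd u p = 1)
    (a b : ℤ) (hab : ¬ (p : ℤ) ∣ a * b) (G H : Polynomial ℤ)
    (hG : G.Monic) (hH : H.Monic)
    (hGH : G * H = X ^ (p ^ r) + C ((p : ℤ) ^ v * a) * X + C ((p : ℤ) ^ u * b)) :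
    G.natDegree = 0 ∨ H.natDegree = 0 := by
  classical
  have hpZ : Prime ((p : ℤ)) := Nat.prime_iff_prime_int.1 hp
  have ha : ¬ (p : ℤ) ∣ a := fun h => hab (h.mul_right b)
  have hb : ¬ (p : ℤ) ∣ b := fun h => hab (h.mul_left a)
  set q := p ^ r with hqdef
  have hq2 : 2 ≤ q := le_trans hp.two_le (Nat.le_self_pow hr.ne' p)
  set F : Polynomial ℤ := X ^ q + C ((p : ℤ) ^ v * a) * X + C ((p : ℤ) ^ u * b) with hFdef
  -- coefficients of F
  have hc0 : F.coeff 0 = (p : ℤ) ^ u * b := by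
    rw [hFdef]
    simp only [coeff_add, coeff_C_mul, coeff_X_pow, coeff_X, coeff_C]
    norm_num [show (0 : ℕ) ≠ q from by omega]
  have hc1 : F.coeff 1 = (p : ℤ) ^ v * a := by
    rw [hFdef]
    simp only [coeff_add, coeff_C_mul, coeff_X_pow, coeff_X, coeff_C]
    norm_num [show (1 : ℕ) ≠ q from by omega]
  have hcq : F.coeff q = 1 := by
    rw [hFdef]
    simp only [coeff_add, coeff_C_mul, coeff_X_pow, coeff_X, coeff_C]
    norm_num [show (1 : ℕ) ≠ q from by omega, show q ≠ 0 from by omega]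
  have hck : ∀ k, 2 ≤ k → k ≠ q → F.coeff k = 0 := by
    intro k h2 hkq
    rw [hFdef]
    simp only [coeff_add, coeff_C_mul, coeff_X_pow, coeff_X, coeff_C]
    norm_num [hkq, show (1 : ℕ) ≠ k from by omega, show k ≠ 0 from by omega]
  -- monicity and degree of F
  have hFm : F.Monic := by
    rw [hFdef, add_assoc]
    apply monic_X_pow_add
    apply lt_of_le_of_lt (degree_add_le _ _)
    have d1 : (C ((p : ℤ) ^ v * a) * X).degree ≤ 1 := by
      apply le_trans (degree_mul_le _ _)
      calc (C ((p:ℤ)^v * a)).degree + X.degree ≤ 0 + 1 :=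
            add_le_add degree_C_le degree_X_le
        _ = 1 := by norm_num
    have d2 : (C ((p : ℤ) ^ u * b)).degree ≤ 1 := le_trans degree_C_le (by norm_num)
    have : max (C ((p : ℤ) ^ v * a) * X).degree (C ((p : ℤ) ^ u * b)).degree ≤ 1 :=
      max_le d1 d2
    apply lt_of_le_of_lt this
    exact_mod_cast Nat.cast_lt.2 (by omega : 1 < q)
  have hFdeg : F.natDegree = q := by
    have hdeg : F.degree = q := by
      rw [hFdef, add_assoc]
      rw [degree_add_eq_left_of_degree_lt, degree_X_pow]
      rw [degree_X_pow]
      apply lt_of_le_of_lt (degree_add_le _ _)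
      have d1 : (C ((p : ℤ) ^ v * a) * X).degree ≤ 1 := by
        apply le_trans (degree_mul_le _ _)
        calc (C ((p:ℤ)^v * a)).degree + X.degree ≤ 0 + 1 :=
              add_le_add degree_C_le degree_X_le
          _ = 1 := by norm_num
      have d2 : (C ((p : ℤ) ^ u * b)).degree ≤ 1 := le_trans degree_C_le (by norm_num)
      apply lt_of_le_of_lt (max_le d1 d2)
      exact_mod_cast Nat.cast_lt.2 (by omega : 1 < q)
    exact natDegree_eq_of_degree_eq_some hdeg
  -- emultiplicity of the constant coefficient
  have hem0 : emultiplicity (p : ℤ) (F.coeff 0) = ((u : ℕ) : ℕ∞) := by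
    rw [hc0, emultiplicity_mul hpZ, emultiplicity_pow_self_of_prime hpZ,
      emultiplicity_eq_zero.2 hb, add_zero]
  -- the Newton polygon bound for F
  have hFabove : ∀ k, ((u * q : ℕ) : ℕ∞) ≤ Wt p r u F k := by
    intro k
    match k with
    | 0 =>
      rw [wt_eq p r u F 0 u hem0]
      refine Nat.cast_le.2 (le_of_eq ?_)
      rw [hqdef]; ring
    | 1 =>
      have hem1 : emultiplicity (p : ℤ) (F.coeff 1) = ((v : ℕ) : ℕ∞) := by
        rw [hc1, emultiplicity_mul hpZ, emultiplicity_pow_self_of_prime hpZ,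
          emultiplicity_eq_zero.2 ha, add_zero]
      rw [wt_eq p r u F 1 v hem1]
      refine Nat.cast_le.2 ?_
      have h1 : p ^ r * u ≤ p ^ r * v := Nat.mul_le_mul_left _ huv
      calc u * q = p ^ r * u := by rw [hqdef, Nat.mul_comm]
        _ ≤ p ^ r * v := h1
        _ ≤ p ^ r * v + u * 1 := Nat.le_add_right _ _
    | (k + 2) =>
      by_cases hkq : k + 2 = q
      · have hemq : emultiplicity (p : ℤ) (F.coeff (k + 2)) = ((0 : ℕ) : ℕ∞) := by
          rw [hkq, hcq, Nat.cast_zero, emultiplicity_eq_zero]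
          exact hpZ.not_dvd_one
        rw [wt_eq p r u F (k + 2) 0 hemq]
        refine Nat.cast_le.2 (le_of_eq ?_)
        rw [hkq]; ring
      · rw [wt_top p r u hp F (k + 2) (hck (k + 2) (by omega) hkq)]
        exact le_top
  -- main argument
  by_contra hcon
  push_neg at hcon
  obtain ⟨hm1, hn1⟩ := hcon
  set m := G.natDegree with hm
  set n := H.natDegree with hn
  have hq' : m + n = q := by
    rw [hm, hn, ← hG.natDegree_mul hH, hGH]; exact hFdeg
  have hFa' : ∀ k, ((u * q : ℕ) : ℕ∞) ≤ Wt p r u (G * H) k := by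
    intro k; rw [hGH]; exact hFabove k
  have hFa'' : ∀ k, ((u * q : ℕ) : ℕ∞) ≤ Wt p r u (H * G) k := by
    intro k; rw [mul_comm H G]; exact hFa' k
  have haG := keyA p hp r u q G H hG hH hq' hFa'
  have haH := keyA p hp r u q H G hH hG (by omega) hFa''
  -- constant coefficients
  have h0 : G.coeff 0 * H.coeff 0 = F.coeff 0 := by
    rw [← mul_coeff_zero, hGH]
  have hsum : emultiplicity (p : ℤ) (G.coeff 0) + emultiplicity (p : ℤ) (H.coeff 0)
      = ((u : ℕ) : ℕ∞) := by
    rw [← emultiplicity_mul hpZ, h0, hem0]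
  have hgt : emultiplicity (p : ℤ) (G.coeff 0) ≠ ⊤ := by
    intro h; rw [h, top_add] at hsum; exact (WithTop.natCast_ne_top u) hsum.symm
  have hht : emultiplicity (p : ℤ) (H.coeff 0) ≠ ⊤ := by
    intro h; rw [h, add_top] at hsum; exact (WithTop.natCast_ne_top u) hsum.symm
  obtain ⟨α, hα⟩ : ∃ x : ℕ, emultiplicity (p : ℤ) (G.coeff 0) = (x : ℕ∞) :=
    ⟨_, (WithTop.coe_untop _ hgt).symm⟩
  obtain ⟨β, hβ⟩ : ∃ x : ℕ, emultiplicity (p : ℤ) (H.coeff 0) = (x : ℕ∞) :=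
    ⟨_, (WithTop.coe_untop _ hht).symm⟩
  have hαβ : α + β = u := by
    rw [hα, hβ] at hsum; exact_mod_cast hsum
  have hGa : u * m ≤ p ^ r * α := by
    have h := haG 0
    rw [wt_eq p r u G 0 α hα] at h
    have h' := Nat.cast_le.1 h
    simpa [hm] using h'
  have hHa : u * n ≤ p ^ r * β := by
    have h := haH 0
    rw [wt_eq p r u H 0 β hβ] at h
    have h' := Nat.cast_le.1 h
    simpa [hn] using h'
  have htot : p ^ r * α + p ^ r * β = u * m + u * n := by
    calc p ^ r * α + p ^ r * β = p ^ r * (α + β) := by ring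
      _ = p ^ r * u := by rw [hαβ]
      _ = u * q := by rw [hqdef, Nat.mul_comm]
      _ = u * (m + n) := by rw [hq']
      _ = u * m + u * n := by ring
  have hAeq : p ^ r * α = u * m := by
    generalize p ^ r * α = A at *
    generalize p ^ r * β = B at *
    generalize u * m = M at *
    generalize u * n = N at *
    omega
  have hdvd : p ^ r ∣ u * m := ⟨α, hAeq.symm⟩
  have hco : Nat.Coprime u (p ^ r) := Nat.Coprime.pow_right r hgcd
  have hdm : p ^ r ∣ m := (Nat.Coprime.symm hco).dvd_of_dvd_mul_left hdvd
  have := Nat.le_of_dvd (by omega) hdm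
  omega

/-- For a prime `p`, integers `v ≥ u ≥ 2` with `gcd(u, p) = 1`, `r ≥ 1`, and integers
`a, b` with `p ∤ ab`, the trinomial `x^{p^r} + p^v a x + p^u b` is irreducible over `ℚ`. -/
theorem trinomial_irreducible (p : ℕ) (hp : p.Prime) (r u v : ℕ) (hr : 0 < r)
    (hu : 2 ≤ u) (huv : u ≤ v) (hgcd : Nat.gcd u p = 1)
    (a b : ℤ) (hab : ¬ (p : ℤ) ∣ a * b) :
    Irreducible ((X ^ (p ^ r) + C ((p : ℤ) ^ v * a) * X + C ((p : ℤ) ^ u * b)).map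
      (Int.castRingHom ℚ)) := by
  set q := p ^ r with hqdef
  have hq2 : 2 ≤ q := le_trans hp.two_le (Nat.le_self_pow hr.ne' p)
  set F : Polynomial ℤ := X ^ q + C ((p : ℤ) ^ v * a) * X + C ((p : ℤ) ^ u * b) with hFdef
  have hFm : F.Monic := by
    rw [hFdef, add_assoc]
    apply monic_X_pow_add
    apply lt_of_le_of_lt (degree_add_le _ _)
    have d1 : (C ((p : ℤ) ^ v * a) * X).degree ≤ 1 := by
      apply le_trans (degree_mul_le _ _)
      calc (C ((p:ℤ)^v * a)).degree + X.degree ≤ 0 + 1 :=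
            add_le_add degree_C_le degree_X_le
        _ = 1 := by norm_num
    have d2 : (C ((p : ℤ) ^ u * b)).degree ≤ 1 := le_trans degree_C_le (by norm_num)
    apply lt_of_le_of_lt (max_le d1 d2)
    exact_mod_cast Nat.cast_lt.2 (by omega : 1 < q)
  have hFdeg : F.natDegree = q := by
    have hdeg : F.degree = q := by
      rw [hFdef, add_assoc]
      rw [degree_add_eq_left_of_degree_lt, degree_X_pow]
      rw [degree_X_pow]
      apply lt_of_le_of_lt (degree_add_le _ _)
      have d1 : (C ((p : ℤ) ^ v * a) * X).degree ≤ 1 := by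
        apply le_trans (degree_mul_le _ _)
        calc (C ((p:ℤ)^v * a)).degree + X.degree ≤ 0 + 1 :=
              add_le_add degree_C_le degree_X_le
          _ = 1 := by norm_num
      have d2 : (C ((p : ℤ) ^ u * b)).degree ≤ 1 := le_trans degree_C_le (by norm_num)
      apply lt_of_le_of_lt (max_le d1 d2)
      exact_mod_cast Nat.cast_lt.2 (by omega : 1 < q)
    exact natDegree_eq_of_degree_eq_some hdeg
  have hirr : Irreducible F := by
    constructor
    · exact not_isUnit_of_natDegree_pos F (by omega)
    · intro G H hGH
      have hlc : G.leadingCoeff * H.leadingCoeff = 1 := by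
        rw [← leadingCoeff_mul, ← hGH, hFm.leadingCoeff]
      have main : ∀ G' H' : Polynomial ℤ, G'.Monic → H'.Monic → G' * H' = F →
          IsUnit G' ∨ IsUnit H' := by
        intro G' H' hG' hH' hGH'
        rcases step2 p hp r u v hr hu huv hgcd a b hab G' H' hG' hH'
            (by rw [hGH', hFdef]) with h | h
        · exact Or.inl ((hG'.natDegree_eq_zero.1 h) ▸ isUnit_one)
        · exact Or.inr ((hH'.natDegree_eq_zero.1 h) ▸ isUnit_one)
      rcases Int.mul_eq_one_iff_eq_one_or_neg_one.1 hlc with ⟨h1, h2⟩ | ⟨h1, h2⟩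
      · exact main G H h1 h2 hGH.symm
      · have hGm : (-G).Monic := by
          rw [Monic, leadingCoeff_neg, h1]; ring
        have hHm : (-H).Monic := by
          rw [Monic, leadingCoeff_neg, h2]; ring
        rcases main (-G) (-H) hGm hHm (by rw [neg_mul_neg]; exact hGH.symm) with h | h
        · exact Or.inl (by simpa using h.neg)
        · exact Or.inr (by simpa using h.neg)
  rw [← algebraMap_int_eq]
  exact hFm.irreducible_iff_irreducible_map_fraction_map.1 hirr
end
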